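/- Let (a_k)_{k≥1} be a sequence of positive integers such that a_m divides a_n whenever n ≤ m, and a_k = 1 for all sufficiently large k. Then there exists a finite abelian group G and a nilpotent endomorphism φ of G such that [ker^(k)(φ) : ker^(k−1)(φ)] = a_k for all k ≥ 1. -/

import Mathlib

/-- The injective additive hom `ZMod m →+ ZMod n` (for `m ∣ n`) sending `1` to `n / m`. -/
def zmodEmb (m n : ℕ) : ZMod m →+ ZMod n :=
  ZMod.lift m ⟨zmultiplesHom (ZMod n) (if m ∣ n then ((n / m : ℕ) : ZMod n) else 0), by
    by_cases h : m ∣ n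
    · rw [if_pos h, zmultiplesHom_apply, natCast_zsmul, nsmul_eq_mul, ← Nat.cast_mul,
        Nat.mul_div_cancel' h, ZMod.natCast_self]
    · rw [if_neg h, zmultiplesHom_apply, smul_zero]⟩

lemma zmodEmb_eq_zero {m n : ℕ} (hm : 0 < m) (hn : 0 < n) (h : m ∣ n) {x : ZMod m}
    (hx : zmodEmb m n x = 0) : x = 0 := by
  haveI : NeZero m := ⟨hm.ne'⟩
  have hxv : ((x.val : ℕ) : ZMod m) = x := ZMod.natCast_rightInverse x
  have hxv' : (((x.val : ℕ) : ℤ) : ZMod m) = x := by push_cast; exact hxv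
  rw [← hxv', zmodEmb, ZMod.lift_coe] at hx
  rw [zmultiplesHom_apply, if_pos h, natCast_zsmul, nsmul_eq_mul, ← Nat.cast_mul] at hx
  rw [ZMod.natCast_eq_zero_iff] at hx
  have hq : 0 < n / m := Nat.div_pos (Nat.le_of_dvd hn h) hm
  have hn' : n = m * (n / m) := (Nat.mul_div_cancel' h).symm
  have hx2 : m * (n / m) ∣ x.val * (n / m) := by rw [← hn']; exact hx
  have hmd : m ∣ x.val := (Nat.mul_dvd_mul_iff_right hq).mp hx2
  have : x.val = 0 := Nat.eq_zero_of_dvd_of_lt hmd (ZMod.val_lt x)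
  rw [← hxv, this, Nat.cast_zero]

/-- The shift endomorphism of `∏ ZMod (a (i+1))`. -/
def bigPsi (a : ℕ → ℕ) (N : ℕ) : AddMonoid.End (∀ i : Fin N, ZMod (a ((i : ℕ) + 1))) where
  toFun x i := if h : (i : ℕ) + 1 < N then
    zmodEmb (a ((i : ℕ) + 2)) (a ((i : ℕ) + 1)) (x ⟨(i : ℕ) + 1, h⟩) else 0
  map_zero' := by funext i; split <;> simp
  map_add' x y := by
    funext i; by_cases h : (i : ℕ) + 1 < N <;> simp [h]

lemma bigPsi_apply (a : ℕ → ℕ) (N : ℕ) (x : ∀ i : Fin N, ZMod (a ((i : ℕ) + 1))) (i : Fin N) :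
    bigPsi a N x i = if h : (i : ℕ) + 1 < N then
      zmodEmb (a ((i : ℕ) + 2)) (a ((i : ℕ) + 1)) (x ⟨(i : ℕ) + 1, h⟩) else 0 := rfl

lemma bigPsi_pow_eq_zero (a : ℕ → ℕ) (N : ℕ) (hpos : ∀ k ≥ 1, 0 < a k)
    (hdvd : ∀ n m : ℕ, 1 ≤ n → n ≤ m → a m ∣ a n) (k : ℕ)
    (x : ∀ i : Fin N, ZMod (a ((i : ℕ) + 1))) :
    (bigPsi a N ^ k) x = 0 ↔ ∀ i : Fin N, k ≤ (i : ℕ) → x i = 0 := by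
  induction k generalizing x with
  | zero => simp [funext_iff]
  | succ k ih =>
    have hstep : (bigPsi a N ^ (k + 1)) x = (bigPsi a N ^ k) (bigPsi a N x) := by
      rw [pow_succ]; rfl
    rw [hstep, ih]
    constructor
    · intro h i hi
      have hj1 : (i : ℕ) - 1 + 1 < N := by omega
      have hk : k ≤ (i : ℕ) - 1 := by omega
      have h2 := h ⟨(i : ℕ) - 1, by omega⟩ hk
      rw [bigPsi_apply] at h2
      rw [dif_pos hj1] at h2
      have h2' : zmodEmb (a ((i : ℕ) - 1 + 2)) (a ((i : ℕ) - 1 + 1))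
          (x ⟨(i : ℕ) - 1 + 1, hj1⟩) = 0 := h2
      have h3 : x ⟨(i : ℕ) - 1 + 1, hj1⟩ = 0 :=
        zmodEmb_eq_zero (m := a ((i : ℕ) - 1 + 2)) (n := a ((i : ℕ) - 1 + 1))
          (hpos ((i : ℕ) - 1 + 2) (by omega)) (hpos ((i : ℕ) - 1 + 1) (by omega))
          (hdvd ((i : ℕ) - 1 + 1) ((i : ℕ) - 1 + 2) (by omega) (by omega)) h2'
      have h4 : (⟨(i : ℕ) - 1 + 1, hj1⟩ : Fin N) = i := Fin.ext (show (i : ℕ) - 1 + 1 = (i : ℕ) by omega)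
      rw [h4] at h3
      exact h3
    · intro h i hi
      rw [bigPsi_apply]
      split
      · rename_i h'
        rw [h ⟨(i : ℕ) + 1, h'⟩ (show k + 1 ≤ (i : ℕ) + 1 by omega), map_zero]
      · rfl

theorem realization_of_kernel_index_sequences (a : ℕ → ℕ)
    (hpos : ∀ k ≥ 1, 0 < a k)
    (hdvd : ∀ n m : ℕ, 1 ≤ n → n ≤ m → a m ∣ a n)
    (hev : ∃ N : ℕ, ∀ k ≥ N, a k = 1) :
    ∃ (G : Type) (_ : CommGroup G) (_ : Finite G) (φ : Monoid.End G),
      (∃ n ≥ 1, ∀ g : G, (φ ^ n) g = 1) ∧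
      ∀ k ≥ 1, (MonoidHom.ker (φ ^ (k - 1))).relIndex (MonoidHom.ker (φ ^ k)) = a k := by
  obtain ⟨N, hN⟩ := hev
  haveI inst1 : ∀ i : Fin N, NeZero (a ((i : ℕ) + 1)) := fun i => ⟨(hpos _ (by omega)).ne'⟩
  set A := ∀ i : Fin N, ZMod (a ((i : ℕ) + 1)) with hA
  let ψ : AddMonoid.End A := bigPsi a N
  let φ : Monoid.End (Multiplicative A) := AddMonoidHom.toMultiplicative (ψ : A →+ A)
  have hφpow : ∀ (k : ℕ) (g : Multiplicative A),
      (φ ^ k) g = Multiplicative.ofAdd ((ψ ^ k) g.toAdd) := by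
    intro k
    induction k with
    | zero => intro g; rw [pow_zero, pow_zero]; rfl
    | succ k ih =>
      intro g
      have h1 : (φ ^ (k + 1)) g = (φ ^ k) (φ g) := by rw [pow_succ]; rfl
      have h2 : (ψ ^ (k + 1)) g.toAdd = (ψ ^ k) (ψ g.toAdd) := by rw [pow_succ]; rfl
      rw [h1, ih (φ g), h2]
      rfl
  have hker : ∀ (k : ℕ) (g : Multiplicative A),
      g ∈ MonoidHom.ker (φ ^ k) ↔ ∀ i : Fin N, k ≤ (i : ℕ) → g.toAdd i = 0 := by
    intro k g
    rw [show g ∈ MonoidHom.ker (φ ^ k) ↔ (φ ^ k) g = 1 from MonoidHom.mem_ker, hφpow k g,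
      show (1 : Multiplicative A) = Multiplicative.ofAdd 0 from rfl,
      Equiv.apply_eq_iff_eq]
    exact bigPsi_pow_eq_zero a N hpos hdvd k g.toAdd
  refine ⟨Multiplicative A, inferInstance, inferInstance, φ, ⟨max N 1, le_max_right _ _, ?_⟩, ?_⟩
  · intro g
    rw [hφpow]
    have h0 : (ψ ^ (max N 1)) g.toAdd = 0 :=
      (bigPsi_pow_eq_zero a N hpos hdvd _ _).mpr (by
        intro i hi
        exact absurd i.isLt (by omega))
    rw [h0]
    rfl
  · intro k hk
    by_cases hkN : k ≤ N
    · obtain ⟨j, rfl⟩ : ∃ j, k = j + 1 := ⟨k - 1, by omega⟩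
      have hjN : j < N := by omega
      let F : (MonoidHom.ker (φ ^ (j + 1))) →* Multiplicative (ZMod (a (j + 1))) :=
        { toFun := fun g => Multiplicative.ofAdd
            (Multiplicative.toAdd (g : Multiplicative A) ⟨j, hjN⟩),
          map_one' := rfl,
          map_mul' := fun g h => rfl }
      have hFsurj : Function.Surjective F := by
        intro y
        refine ⟨⟨Multiplicative.ofAdd (Pi.single
          (M := fun i : Fin N => ZMod (a ((i : ℕ) + 1))) ⟨j, hjN⟩ y.toAdd), ?_⟩, ?_⟩
        · rw [hker]
          intro i hi
          show Pi.single (M := fun i : Fin N => ZMod (a ((i : ℕ) + 1))) ⟨j, hjN⟩ y.toAdd i = 0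
          apply Pi.single_eq_of_ne
          intro hcontra
          rw [hcontra] at hi
          simp only [Fin.val_mk] at hi
          omega
        · show Multiplicative.ofAdd (Pi.single
            (M := fun i : Fin N => ZMod (a ((i : ℕ) + 1))) ⟨j, hjN⟩ y.toAdd ⟨j, hjN⟩) = y
          rw [Pi.single_eq_same]
          rfl
      have hFker : MonoidHom.ker F
          = (MonoidHom.ker (φ ^ j)).subgroupOf (MonoidHom.ker (φ ^ (j + 1))) := by
        ext g
        rw [MonoidHom.mem_ker, Subgroup.mem_subgroupOf, hker]
        constructor
        · intro h i hi
          rcases eq_or_lt_of_le hi with heq | hlt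
          · have h5 : Multiplicative.toAdd (g : Multiplicative A) ⟨j, hjN⟩ = 0 :=
              Multiplicative.ofAdd.injective h
            have hi' : i = ⟨j, hjN⟩ := Fin.ext heq.symm
            rw [hi']
            exact h5
          · exact (hker _ (g : Multiplicative A)).mp g.2 i hlt
        · intro h
          show Multiplicative.ofAdd (Multiplicative.toAdd (g : Multiplicative A) ⟨j, hjN⟩) = 1
          rw [h ⟨j, hjN⟩ (le_refl j)]
          rfl
      calc (MonoidHom.ker (φ ^ (j + 1 - 1))).relIndex (MonoidHom.ker (φ ^ (j + 1)))
          = ((MonoidHom.ker (φ ^ j)).subgroupOf (MonoidHom.ker (φ ^ (j + 1)))).index := rfl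
        _ = (MonoidHom.ker F).index := by rw [hFker]
        _ = Nat.card F.range := Subgroup.index_ker F
        _ = Nat.card (Multiplicative (ZMod (a (j + 1)))) := by
            rw [MonoidHom.range_eq_top.mpr hFsurj]
            exact Nat.card_congr Subgroup.topEquiv.toEquiv
        _ = a (j + 1) := by
            rw [Nat.card_congr Multiplicative.toAdd, Nat.card_zmod]
    · have hker_top : ∀ m, N ≤ m → MonoidHom.ker (φ ^ m) = ⊤ := by
        intro m hm
        ext g
        simp only [Subgroup.mem_top, iff_true]
        rw [hker]
        intro i hi
        exact absurd i.isLt (by omega)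
      erw [hker_top k (by omega), hker_top (k - 1) (by omega), Subgroup.relIndex_self,
        hN k (by omega)]
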